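/- Weak duality for the supply-demand pair: for all y ≥ 0 with y in the domain where φ, ψ are defined, and all v with φ(0) ≤ v ≤ ψ(0), we have ∫_0^y ψ(α)dα − ∫_0^y φ(α)dα ≤ ∫_{φ(0)}^v φ^{-1}(β)dβ + ∫_v^{ψ(0)} ψ^{-1}(β)dβ. -/

import Mathlib

open Set intervalIntegral MeasureTheory

/-- Young-type inequality: for a continuous strictly increasing `φ` with inverse `φinv`
on `[0, ∞)`, `y * v - ∫_0^y φ ≤ ∫_{φ 0}^v φinv` whenever `y ≥ 0` and `v ≥ φ 0`. -/
lemma young_aux (φ : ℝ → ℝ) (hφc : Continuous φ) (hφm : StrictMono φ) (φinv : ℝ → ℝ)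
    (hφi : ∀ x ∈ Set.Ici (0:ℝ), φinv (φ x) = x)
    (hφi' : ∀ b ∈ Set.Ici (φ 0), φ (φinv b) = b)
    {y v : ℝ} (hy : 0 ≤ y) (hv : φ 0 ≤ v) :
    y * v - (∫ α in (0:ℝ)..y, φ α) ≤ ∫ β in (φ 0)..v, φinv β := by
  -- Basic facts about the inverse
  have hinv0 : φinv (φ 0) = 0 := hφi 0 Set.self_mem_Ici
  have hinv_nonneg : ∀ b, φ 0 ≤ b → 0 ≤ φinv b := by
    intro b hb
    have : φ 0 ≤ φ (φinv b) := by rw [hφi' b hb]; exact hb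
    exact hφm.le_iff_le.mp this
  have hinv_mono : MonotoneOn φinv (Set.Ici (φ 0)) := by
    intro a ha b hb hab
    have : φ (φinv a) ≤ φ (φinv b) := by rw [hφi' a ha, hφi' b hb]; exact hab
    exact hφm.le_iff_le.mp this
  -- Continuity of the inverse on `Ici (φ 0)` via an order isomorphism
  have hinv_cont : ContinuousOn φinv (Set.Ici (φ 0)) := by
    let e : Set.Ici (0:ℝ) ≃o Set.Ici (φ 0) :=
      { toFun := fun x => ⟨φ x, hφm.monotone x.2⟩
        invFun := fun b => ⟨φinv b, hinv_nonneg b b.2⟩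
        left_inv := fun x => Subtype.ext (hφi x x.2)
        right_inv := fun b => Subtype.ext (hφi' b b.2)
        map_rel_iff' := by intro a b; exact hφm.le_iff_le }
    have hcont : Continuous (fun b : Set.Ici (φ 0) => ((e.symm b : Set.Ici (0:ℝ)) : ℝ)) :=
      continuous_subtype_val.comp e.symm.continuous
    rw [continuousOn_iff_continuous_restrict]
    exact hcont
  -- integrability of φinv on subintervals of Ici (φ 0)
  have hinv_intble : ∀ a b, φ 0 ≤ a → a ≤ b →
      IntervalIntegrable φinv volume a b := by
    intro a b ha hab
    apply ContinuousOn.intervalIntegrable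
    apply hinv_cont.mono
    rw [Set.uIcc_of_le hab]
    exact fun t ht => le_trans ha ht.1
  -- Key equality: ∫_{φ 0}^w φinv = φinv w * w - ∫_0^{φinv w} φ for w ≥ φ 0
  have key : ∀ w, φ 0 ≤ w →
      (∫ β in (φ 0)..w, φinv β) = φinv w * w - ∫ α in (0:ℝ)..(φinv w), φ α := by
    intro w hw
    set F : ℝ → ℝ := fun u =>
      (∫ β in (φ 0)..u, φinv β) - (φinv u * u - ∫ α in (0:ℝ)..(φinv u), φ α) with hF
    have hprimφ : Continuous fun t : ℝ => ∫ α in (0:ℝ)..t, φ α :=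
      intervalIntegral.continuous_primitive (fun a b => hφc.intervalIntegrable a b) 0
    have hcontF : ContinuousOn F (Set.Icc (φ 0) w) := by
      apply ContinuousOn.sub
      · have : ContinuousOn (fun u => ∫ β in (φ 0)..u, φinv β) (Set.uIcc (φ 0) w) :=
          intervalIntegral.continuousOn_primitive_interval'
            (hinv_intble (φ 0) w le_rfl hw) Set.left_mem_uIcc
        exact this.mono (by rw [Set.uIcc_of_le hw])
      · have hicc : Set.Icc (φ 0) w ⊆ Set.Ici (φ 0) := fun t ht => ht.1
        exact ((hinv_cont.mono hicc).mul continuousOn_id).sub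
          (hprimφ.comp_continuousOn (hinv_cont.mono hicc))
    have hderivF : ∀ x ∈ Set.Ico (φ 0) w, HasDerivWithinAt F 0 (Set.Ici x) x := by
      intro x hx
      have hx0 : φ 0 ≤ x := hx.1
      -- derivative of the primitive of φinv
      have h1 : HasDerivWithinAt (fun u => ∫ β in (φ 0)..u, φinv β) (φinv x)
          (Set.Ici x) x := by
        apply intervalIntegral.integral_hasDerivWithinAt_right
          (hinv_intble (φ 0) x le_rfl hx0)
        · exact ⟨Set.Ioi x, self_mem_nhdsWithin,
            ((hinv_cont.mono (le_trans Set.Ioi_subset_Ici_self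
              (Set.Ici_subset_Ici.mpr hx0))).aestronglyMeasurable
              measurableSet_Ioi)⟩
        · exact (hinv_cont x hx0).mono (le_trans Set.Ioi_subset_Ici_self
            (Set.Ici_subset_Ici.mpr hx0))
      -- derivative of u ↦ φinv u * u - ∫_0^{φinv u} φ via a squeeze argument
      have h2 : HasDerivWithinAt
          (fun u => φinv u * u - ∫ α in (0:ℝ)..(φinv u), φ α) (φinv x)
          (Set.Ici x) x := by
        rw [hasDerivWithinAt_iff_tendsto_slope]
        have hmem : ∀ u ∈ Set.Ici x \ {x},
            φinv x ≤ slope (fun u => φinv u * u - ∫ α in (0:ℝ)..(φinv u), φ α) x u ∧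
            slope (fun u => φinv u * u - ∫ α in (0:ℝ)..(φinv u), φ α) x u ≤ φinv u := by
          intro u hu
          have hxu : x < u := lt_of_le_of_ne hu.1 (fun h => hu.2 h.symm)
          have hu0 : φ 0 ≤ u := le_trans hx0 hxu.le
          have hab : φinv x ≤ φinv u := hinv_mono hx0 hu0 hxu.le
          have ha0 : 0 ≤ φinv x := hinv_nonneg x hx0
          have hφa : φ (φinv x) = x := hφi' x hx0
          have hφb : φ (φinv u) = u := hφi' u hu0
          -- split the integral
          have hsplit : (∫ α in (0:ℝ)..(φinv u), φ α) - (∫ α in (0:ℝ)..(φinv x), φ α)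
              = ∫ α in (φinv x)..(φinv u), φ α := by
            rw [← intervalIntegral.integral_add_adjacent_intervals
              (hφc.intervalIntegrable 0 (φinv x)) (hφc.intervalIntegrable (φinv x) (φinv u))]
            ring
          -- bounds for the integral
          have hlow : (φinv u - φinv x) * x ≤ ∫ α in (φinv x)..(φinv u), φ α := by
            have : ∫ α in (φinv x)..(φinv u), (x : ℝ) ≤ ∫ α in (φinv x)..(φinv u), φ α := by
              apply intervalIntegral.integral_mono_on hab
                (intervalIntegrable_const) (hφc.intervalIntegrable _ _)
              intro t ht
              calc x = φ (φinv x) := hφa.symm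
                _ ≤ φ t := hφm.monotone ht.1
            simpa using this
          have hhigh : (∫ α in (φinv x)..(φinv u), φ α) ≤ (φinv u - φinv x) * u := by
            have : ∫ α in (φinv x)..(φinv u), φ α ≤ ∫ α in (φinv x)..(φinv u), (u : ℝ) := by
              apply intervalIntegral.integral_mono_on hab
                (hφc.intervalIntegrable _ _) (intervalIntegrable_const)
              intro t ht
              calc φ t ≤ φ (φinv u) := hφm.monotone ht.2
                _ = u := hφb
            simpa using this
          have hslope : slope (fun u => φinv u * u - ∫ α in (0:ℝ)..(φinv u), φ α) x u
              = (φinv u * u - φinv x * x - ∫ α in (φinv x)..(φinv u), φ α) / (u - x) := by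
            rw [slope_def_field]
            congr 1
            rw [← hsplit]
            ring
          rw [hslope]
          constructor
          · rw [le_div_iff₀ (by linarith)]
            nlinarith [hhigh]
          · rw [div_le_iff₀ (by linarith)]
            nlinarith [hlow]
        have hcw : Filter.Tendsto φinv (nhdsWithin x (Set.Ici x \ {x})) (nhds (φinv x)) := by
          have : ContinuousWithinAt φinv (Set.Ici x) x :=
            (hinv_cont x hx0).mono (Set.Ici_subset_Ici.mpr hx0)
          exact this.tendsto.mono_left (nhdsWithin_mono x Set.diff_subset)
        apply tendsto_of_tendsto_of_tendsto_of_le_of_le' tendsto_const_nhds hcw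
        · filter_upwards [self_mem_nhdsWithin] with u hu using (hmem u hu).1
        · filter_upwards [self_mem_nhdsWithin] with u hu using (hmem u hu).2
      have := h1.sub h2
      rw [sub_self] at this
      exact this
    have := constant_of_has_deriv_right_zero hcontF hderivF w ⟨hw, le_rfl⟩
    have hF0 : F (φ 0) = 0 := by
      simp [hF, hinv0, intervalIntegral.integral_same]
    rw [hF0] at this
    have : (∫ β in (φ 0)..w, φinv β) - (φinv w * w - ∫ α in (0:ℝ)..(φinv w), φ α) = 0 :=
      this
    linarith
  -- The function G t = t * v - ∫_0^t φ is maximized at t = φinv v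
  set x := φinv v with hxdef
  have hx0 : 0 ≤ x := hinv_nonneg v hv
  have hφx : φ x = v := hφi' v hv
  set G : ℝ → ℝ := fun t => t * v - ∫ α in (0:ℝ)..t, φ α with hGdef
  have hGderiv : ∀ t : ℝ, HasDerivAt G (v - φ t) t := by
    intro t
    have h1 : HasDerivAt (fun t : ℝ => t * v) v t := by
      simpa using (hasDerivAt_id t).mul_const v
    have h2 : HasDerivAt (fun t : ℝ => ∫ α in (0:ℝ)..t, φ α) (φ t) t :=
      intervalIntegral.integral_hasDerivAt_right (hφc.intervalIntegrable 0 t)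
        (hφc.stronglyMeasurableAtFilter volume _) hφc.continuousAt
    exact h1.sub h2
  have hGcont : Continuous G :=
    (continuous_id.mul continuous_const).sub
      (intervalIntegral.continuous_primitive (fun a b => hφc.intervalIntegrable a b) 0)
  have hGyx : G y ≤ G x := by
    rcases le_total y x with h | h
    · -- G is monotone on [y, x]
      have hmono : MonotoneOn G (Set.Icc y x) := by
        apply monotoneOn_of_deriv_nonneg (convex_Icc y x) hGcont.continuousOn
        · intro t _
          exact (hGderiv t).differentiableAt.differentiableWithinAt
        · intro t ht
          rw [interior_Icc] at ht
          rw [(hGderiv t).deriv]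
          have : φ t ≤ φ x := hφm.monotone ht.2.le
          rw [hφx] at this
          linarith
      exact hmono ⟨le_rfl, h⟩ ⟨h, le_rfl⟩ h
    · -- G is antitone on [x, y]
      have hanti : AntitoneOn G (Set.Icc x y) := by
        apply antitoneOn_of_deriv_nonpos (convex_Icc x y) hGcont.continuousOn
        · intro t _
          exact (hGderiv t).differentiableAt.differentiableWithinAt
        · intro t ht
          rw [interior_Icc] at ht
          rw [(hGderiv t).deriv]
          have : φ x ≤ φ t := hφm.monotone ht.1.le
          rw [hφx] at this
          linarith
      exact hanti ⟨le_rfl, h⟩ ⟨h, le_rfl⟩ h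
  have hGx : G x = ∫ β in (φ 0)..v, φinv β := by
    rw [key v hv]
    try simp [hGdef, hxdef, mul_comm]
  calc y * v - (∫ α in (0:ℝ)..y, φ α) = G y := rfl
    _ ≤ G x := hGyx
    _ = ∫ β in (φ 0)..v, φinv β := hGx

theorem supply_demand_weak_duality
    (φ ψ : ℝ → ℝ)
    (hφc : Continuous φ) (hφm : StrictMono φ)
    (hψc : Continuous ψ) (hψm : StrictAnti ψ)
    (h0 : φ 0 < ψ 0)
    (φinv ψinv : ℝ → ℝ)
    (hφi : ∀ x ∈ Set.Ici (0:ℝ), φinv (φ x) = x)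
    (hφi' : ∀ b ∈ Set.Ici (φ 0), φ (φinv b) = b)
    (hψi : ∀ x ∈ Set.Ici (0:ℝ), ψinv (ψ x) = x)
    (hψi' : ∀ b ∈ Set.Iic (ψ 0), ψ (ψinv b) = b) :
    ∀ y ≥ (0:ℝ), ∀ v, φ 0 ≤ v → v ≤ ψ 0 →
      (∫ α in (0:ℝ)..y, ψ α) - (∫ α in (0:ℝ)..y, φ α)
        ≤ (∫ β in (φ 0)..v, φinv β) + (∫ β in v..(ψ 0), ψinv β) := by
  intro y hy v hv1 hv2
  -- first application: to φ
  have H1 : y * v - (∫ α in (0:ℝ)..y, φ α) ≤ ∫ β in (φ 0)..v, φinv β :=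
    young_aux φ hφc hφm φinv hφi hφi' hy hv1
  -- second application: to -ψ with inverse b ↦ ψinv (-b)
  have H2 : y * (-v) - (∫ α in (0:ℝ)..y, -ψ α) ≤
      ∫ β in (-(ψ 0))..(-v), ψinv (-β) := by
    have := young_aux (fun t => -ψ t) (hψc.neg) (fun a b hab => neg_lt_neg (hψm hab))
      (fun b => ψinv (-b))
      (fun x hx => by simp only [neg_neg]; exact hψi x hx)
      (fun b hb => by
        have hb' : -b ≤ ψ 0 := neg_le.mp hb
        show -ψ (ψinv (-b)) = b
        rw [hψi' (-b) hb', neg_neg])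
      hy (neg_le_neg hv2)
    exact this
  have hcomp : (∫ β in (-(ψ 0))..(-v), ψinv (-β)) = ∫ β in v..(ψ 0), ψinv β := by
    rw [intervalIntegral.integral_comp_neg fun β => ψinv β]
    simp
  rw [hcomp] at H2
  have hψint : (∫ α in (0:ℝ)..y, -ψ α) = -∫ α in (0:ℝ)..y, ψ α := by
    simp
  rw [hψint] at H2
  linarith
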